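/- arXiv:1211.6831 — 5 statements merged into one kernel-verified Lean document; each statement's English description precedes it below -/
import Mathlib

section
/- Let x be a right-continuous function with left limits from [0,∞) to ℝ with x(0) ≥ 0. The solution of the one-dimensional Skorohod problem for x is unique: if (z₁,y₁) and (z₂,y₂) both satisfy z(t) = x(t) + y(t) ≥ 0, y(0) = 0, y nondecreasing, and ∫_0^∞ z(t) dy(t) = 0, then z₁ = z₂ and y₁ = y₂. -/
open Set Filter MeasureTheory

/-- A function is RCLL (right continuous with left limits) on `[0, ∞)`. -/
def RCLL (f : ℝ → ℝ) : Prop :=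
  (∀ t : ℝ, 0 ≤ t → ContinuousWithinAt f (Set.Ici t) t) ∧
  (∀ t : ℝ, 0 < t → ∃ l : ℝ, Filter.Tendsto f (nhdsWithin t (Set.Iio t)) (nhds l))

/-- `(z, y)` is a solution of the one-dimensional Skorohod problem for `x`:
`z, y` are nonnegative RCLL functions on `[0,∞)` with `z = x + y ≥ 0`, `y 0 = 0`,
`y` nondecreasing, and `∫_0^∞ z dy = 0` (integral against the Stieltjes measure
associated with `y`, extended by `0` on `(-∞, 0)`). -/
def IsSkorohodSolution (x z y : ℝ → ℝ) : Prop :=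
  RCLL z ∧ RCLL y ∧
  (∀ t : ℝ, 0 ≤ t → z t = x t + y t) ∧
  (∀ t : ℝ, 0 ≤ t → 0 ≤ z t) ∧
  (∀ t : ℝ, 0 ≤ t → 0 ≤ y t) ∧
  y 0 = 0 ∧
  (∀ s t : ℝ, 0 ≤ s → s ≤ t → y s ≤ y t) ∧
  (∀ Y : StieltjesFunction ℝ, (∀ t : ℝ, Y t = if t < 0 then 0 else y t) →
    ∫⁻ t, ENNReal.ofReal (z t) ∂Y.measure = 0)

open scoped Topology

/-- A right-continuous real function is measurable. -/
lemma skorohod_aux_measurable_of_rightContinuous (f : ℝ → ℝ)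
    (hf : ∀ t : ℝ, ContinuousWithinAt f (Set.Ici t) t) : Measurable f := by
  have key : ∀ n : ℕ,
      Measurable (fun t : ℝ => f ((⌈t * (n + 1)⌉ : ℤ) / (n + 1) : ℝ)) := by
    intro n
    have h1 : Measurable fun t : ℝ => (⌈t * ((n : ℝ) + 1)⌉ : ℤ) :=
      Int.measurable_ceil.comp (measurable_id.mul_const _)
    exact (measurable_from_top (f := fun k : ℤ => f ((k : ℝ) / (n + 1)))).comp h1
  apply measurable_of_tendsto_metrizable key
  rw [tendsto_pi_nhds]
  intro t
  have hpos : ∀ n : ℕ, (0 : ℝ) < (n : ℝ) + 1 := fun n => by positivity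
  have hmem : ∀ n : ℕ, ((⌈t * (n + 1)⌉ : ℤ) / (n + 1) : ℝ) ∈ Set.Ici t := by
    intro n
    rw [Set.mem_Ici, le_div_iff₀ (hpos n)]
    exact Int.le_ceil _
  have hle : ∀ n : ℕ, ((⌈t * (n + 1)⌉ : ℤ) / (n + 1) : ℝ) ≤ t + 1 / (n + 1) := by
    intro n
    rw [div_le_iff₀ (hpos n)]
    have := (Int.ceil_lt_add_one (t * ((n : ℝ) + 1))).le
    calc ((⌈t * ((n : ℝ) + 1)⌉ : ℤ) : ℝ) ≤ t * ((n : ℝ) + 1) + 1 := this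
      _ = (t + 1 / ((n : ℝ) + 1)) * ((n : ℝ) + 1) := by field_simp
  have htend : Tendsto (fun n : ℕ => ((⌈t * (n + 1)⌉ : ℤ) / (n + 1) : ℝ))
      atTop (𝓝[Set.Ici t] t) := by
    apply tendsto_nhdsWithin_of_tendsto_nhds_of_eventually_within
    · have h2 : Tendsto (fun n : ℕ => t + 1 / ((n : ℝ) + 1)) atTop (𝓝 (t + 0)) :=
        tendsto_const_nhds.add (tendsto_one_div_add_atTop_nhds_zero_nat)
      rw [add_zero] at h2
      exact tendsto_of_tendsto_of_tendsto_of_le_of_le tendsto_const_nhds h2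
        (fun n => hmem n) hle
    · exact Filter.Eventually.of_forall hmem
  exact (hf t).tendsto.comp htend

/-- Existence of the Stieltjes function extending `y` by `0` on negatives. -/
lemma skorohod_aux_exists_Y (y : ℝ → ℝ)
    (hrc : ∀ t : ℝ, 0 ≤ t → ContinuousWithinAt y (Set.Ici t) t)
    (h0 : y 0 = 0) (hmono : ∀ s t : ℝ, 0 ≤ s → s ≤ t → y s ≤ y t) :
    ∃ Y : StieltjesFunction ℝ, ∀ t : ℝ, Y t = if t < 0 then 0 else y t := by
  have hnn : ∀ t : ℝ, 0 ≤ t → 0 ≤ y t := fun t ht => h0 ▸ hmono 0 t le_rfl ht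
  refine ⟨⟨fun t => if t < 0 then 0 else y t, ?_, ?_⟩, fun t => rfl⟩
  · intro a b hab
    by_cases hb : b < 0
    · simp [hb, not_lt.mpr, lt_of_le_of_lt hab hb]
    · by_cases ha : a < 0
      · simp only [if_pos ha, if_neg hb]
        exact hnn b (not_lt.mp hb)
      · simp only [if_neg ha, if_neg hb]
        exact hmono a b (not_lt.mp ha) hab
  · intro t
    by_cases ht : t < 0
    · have hev : ∀ᶠ s in 𝓝[Set.Ici t] t,
          (if s < 0 then (0:ℝ) else y s) = (fun _ => (0:ℝ)) s := by
        filter_upwards [nhdsWithin_le_nhds (Iio_mem_nhds ht)] with s hs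
        simp only [Set.mem_Iio] at hs
        rw [if_pos hs]
      exact (continuousWithinAt_const (b := (0:ℝ))).congr_of_eventuallyEq hev (if_pos ht)
    · push_neg at ht
      refine (hrc t ht).congr (fun s hs => ?_) ?_
      · rw [if_neg (not_lt.mpr (le_trans ht hs))]
      · rw [if_neg (not_lt.mpr ht)]

/-- The Stieltjes measure puts no mass where `z` is positive. -/
lemma skorohod_aux_null (z : ℝ → ℝ) (Y : StieltjesFunction ℝ)
    (hYneg : ∀ t : ℝ, t < 0 → Y t = 0)
    (hzrc : ∀ t : ℝ, 0 ≤ t → ContinuousWithinAt z (Set.Ici t) t)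
    (hint : ∫⁻ t, ENNReal.ofReal (z t) ∂Y.measure = 0) :
    Y.measure {s : ℝ | 0 ≤ s ∧ 0 < z s} = 0 := by
  set g : ℝ → ℝ := fun s => if s < 0 then 0 else z s with hg
  have hgrc : ∀ t : ℝ, ContinuousWithinAt g (Set.Ici t) t := by
    intro t
    by_cases ht : t < 0
    · have hev : ∀ᶠ s in 𝓝[Set.Ici t] t, g s = (fun _ => (0:ℝ)) s := by
        filter_upwards [nhdsWithin_le_nhds (Iio_mem_nhds ht)] with s hs
        simp only [Set.mem_Iio] at hs
        simp only [hg]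
        rw [if_pos hs]
      exact (continuousWithinAt_const (b := (0:ℝ))).congr_of_eventuallyEq hev
        (by simp [hg, ht])
    · push_neg at ht
      refine (hzrc t ht).congr (fun s hs => ?_) ?_
      · simp [hg, not_lt.mpr (le_trans ht hs)]
      · simp [hg, not_lt.mpr ht]
  have hgmeas : Measurable g := skorohod_aux_measurable_of_rightContinuous g hgrc
  -- the measure of (-∞, 0) is zero
  have hYbot : Tendsto Y atBot (𝓝 0) := by
    apply Tendsto.congr' _ (tendsto_const_nhds (x := (0:ℝ)))
    filter_upwards [eventually_lt_atBot (0:ℝ)] with s hs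
    exact (hYneg s hs).symm
  have hIic : ∀ a : ℝ, a < 0 → Y.measure (Set.Iic a) = 0 := by
    intro a ha
    rw [Y.measure_Iic hYbot a, hYneg a ha, sub_zero, ENNReal.ofReal_zero]
  have hIio : Y.measure (Set.Iio 0) = 0 := by
    have hsub : Set.Iio (0:ℝ) ⊆ ⋃ n : ℕ, Set.Iic (-(1 / ((n : ℝ) + 1))) := by
      intro s hs
      simp only [Set.mem_Iio] at hs
      obtain ⟨n, hn⟩ := exists_nat_ge (1 / (-s))
      refine Set.mem_iUnion.mpr ⟨n, ?_⟩
      rw [Set.mem_Iic, le_neg]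
      rw [div_le_iff₀ (by linarith)] at hn ⊢
      nlinarith
    refine le_antisymm (le_trans (measure_mono hsub) ?_) zero_le
    refine le_trans (measure_iUnion_le _) (le_of_eq ?_)
    have h0 : ∀ n : ℕ, Y.measure (Set.Iic (-(1 / ((n : ℝ) + 1)))) = 0 := by
      intro n
      refine hIic _ ?_
      have : (0:ℝ) < 1 / ((n : ℝ) + 1) := by positivity
      linarith
    simp only [h0, tsum_zero]
  have hae : (fun t => ENNReal.ofReal (z t)) =ᵐ[Y.measure]
      (fun t => ENNReal.ofReal (g t)) := by
    rw [Filter.EventuallyEq, ae_iff]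
    refine measure_mono_null (fun s hs => ?_) hIio
    simp only [Set.mem_setOf_eq] at hs
    by_contra hge
    simp only [Set.mem_Iio, not_lt] at hge
    exact hs (by simp [hg, not_lt.mpr hge])
  have hgint : ∫⁻ t, ENNReal.ofReal (g t) ∂Y.measure = 0 := by
    rw [← lintegral_congr_ae hae]; exact hint
  have hzero := (lintegral_eq_zero_iff (ENNReal.measurable_ofReal.comp hgmeas)).mp hgint
  rw [Filter.EventuallyEq, ae_iff] at hzero
  refine measure_mono_null (fun s hs => ?_) hzero
  simp only [Set.mem_setOf_eq] at hs ⊢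
  have : g s = z s := by simp [hg, not_lt.mpr hs.1]
  simp only [Function.comp, Pi.zero_apply]
  rw [this]
  simp [ENNReal.ofReal_eq_zero, not_le, hs.2]

/-- One direction of uniqueness: `y₁ ≤ y₂` on `[0, ∞)`. -/
lemma skorohod_aux_le (x z₁ y₁ z₂ y₂ : ℝ → ℝ)
    (h₁ : IsSkorohodSolution x z₁ y₁) (h₂ : IsSkorohodSolution x z₂ y₂) :
    ∀ t : ℝ, 0 ≤ t → y₁ t ≤ y₂ t := by
  obtain ⟨⟨hz₁rc, -⟩, ⟨hy₁rc, -⟩, hz₁eq, hz₁nn, hy₁nn, hy₁0, hy₁mono, hint₁⟩ := h₁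
  obtain ⟨⟨hz₂rc, -⟩, ⟨hy₂rc, -⟩, hz₂eq, hz₂nn, hy₂nn, hy₂0, hy₂mono, hint₂⟩ := h₂
  intro t ht
  by_contra hlt
  push_neg at hlt
  obtain ⟨Y₁, hY₁⟩ := skorohod_aux_exists_Y y₁ hy₁rc hy₁0 hy₁mono
  have hY₁neg : ∀ s : ℝ, s < 0 → Y₁ s = 0 := fun s hs => by rw [hY₁ s, if_pos hs]
  have hY₁eq : ∀ s : ℝ, 0 ≤ s → Y₁ s = y₁ s := fun s hs => by
    rw [hY₁ s, if_neg (not_lt.mpr hs)]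
  have hnull : Y₁.measure {s : ℝ | 0 ≤ s ∧ 0 < z₁ s} = 0 :=
    skorohod_aux_null z₁ Y₁ hY₁neg hz₁rc (hint₁ Y₁ hY₁)
  set S : Set ℝ := {s : ℝ | s ∈ Set.Icc 0 t ∧ y₁ s ≤ y₂ s} with hS
  have h0S : (0:ℝ) ∈ S := ⟨⟨le_rfl, ht⟩, by rw [hy₁0, hy₂0]⟩
  have hne : S.Nonempty := ⟨0, h0S⟩
  have hbdd : BddAbove S := ⟨t, fun s hs => hs.1.2⟩
  set τ := sSup S with hτ
  have hτ0 : 0 ≤ τ := le_csSup hbdd h0S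
  have hτt : τ ≤ t := csSup_le hne fun s hs => hs.1.2
  have hgt : ∀ s : ℝ, τ < s → s ≤ t → y₂ s < y₁ s := by
    intro s hτs hst
    by_contra hc
    push_neg at hc
    exact absurd (le_csSup hbdd (⟨⟨le_trans hτ0 hτs.le, hst⟩, hc⟩ : s ∈ S))
      (not_le.mpr hτs)
  have hzpos : ∀ s : ℝ, τ < s → s ≤ t → 0 < z₁ s := by
    intro s hτs hst
    have h0s : (0:ℝ) ≤ s := le_trans hτ0 hτs.le
    have := hgt s hτs hst
    have e1 := hz₁eq s h0s
    have e2 := hz₂eq s h0s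
    have := hz₂nn s h0s
    linarith
  by_cases hcase : y₁ τ ≤ y₂ τ
  · -- the supremum point still satisfies y₁ ≤ y₂
    have hsub : Set.Ioc τ t ⊆ {s : ℝ | 0 ≤ s ∧ 0 < z₁ s} := fun s hs =>
      ⟨le_trans hτ0 hs.1.le, hzpos s hs.1 hs.2⟩
    have hm : Y₁.measure (Set.Ioc τ t) = 0 := measure_mono_null hsub hnull
    rw [Y₁.measure_Ioc, ENNReal.ofReal_eq_zero] at hm
    rw [hY₁eq t ht, hY₁eq τ hτ0] at hm
    have := hy₂mono τ t hτ0 hτt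
    linarith
  · push_neg at hcase
    have hz₁τ : 0 < z₁ τ := by
      have e1 := hz₁eq τ hτ0
      have e2 := hz₂eq τ hτ0
      have := hz₂nn τ hτ0
      linarith
    have hsub : Set.Icc τ t ⊆ {s : ℝ | 0 ≤ s ∧ 0 < z₁ s} := by
      intro s hs
      refine ⟨le_trans hτ0 hs.1, ?_⟩
      rcases eq_or_lt_of_le hs.1 with h | h
      · rwa [← h]
      · exact hzpos s h hs.2
    have hm : Y₁.measure (Set.Icc τ t) = 0 := measure_mono_null hsub hnull
    rw [Y₁.measure_Icc, ENNReal.ofReal_eq_zero] at hm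
    -- Y₁ t ≤ leftLim Y₁ τ ≤ y₂ t
    have hlim : Tendsto Y₁ (𝓝[<] τ) (𝓝 (Function.leftLim Y₁ τ)) :=
      Y₁.mono.tendsto_leftLim τ
    have hbound : ∀ s ∈ Set.Iio τ, Y₁ s ≤ y₂ t := by
      intro s hs
      obtain ⟨s', hs'S, hss'⟩ := exists_lt_of_lt_csSup hne hs
      calc Y₁ s ≤ Y₁ s' := Y₁.mono hss'.le
        _ = y₁ s' := hY₁eq s' hs'S.1.1
        _ ≤ y₂ s' := hs'S.2
        _ ≤ y₂ t := hy₂mono s' t hs'S.1.1 hs'S.1.2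
    have hll : Function.leftLim Y₁ τ ≤ y₂ t :=
      le_of_tendsto hlim (eventually_nhdsWithin_of_forall hbound)
    rw [hY₁eq t ht] at hm
    linarith

/-- **Uniqueness for the 1-dimensional Skorohod problem.** -/
theorem skorohod_problem_uniqueness
    (x : ℝ → ℝ) (hx : RCLL x) (hx0 : 0 ≤ x 0)
    (z₁ y₁ z₂ y₂ : ℝ → ℝ)
    (h₁ : IsSkorohodSolution x z₁ y₁)
    (h₂ : IsSkorohodSolution x z₂ y₂) :
    ∀ t : ℝ, 0 ≤ t → z₁ t = z₂ t ∧ y₁ t = y₂ t := by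
  intro t ht
  have hy : y₁ t = y₂ t :=
    le_antisymm (skorohod_aux_le x z₁ y₁ z₂ y₂ h₁ h₂ t ht)
      (skorohod_aux_le x z₂ y₂ z₁ y₁ h₂ h₁ t ht)
  refine ⟨?_, hy⟩
  rw [h₁.2.2.1 t ht, h₂.2.2.1 t ht, hy]
end

section
/- Let x be an RCLL function from [0,∞) to ℝ with x(0) ≥ 0, and let (z,y) be a pair of RCLL functions such that z(t) = x(t) + y(t) ≥ 0 for all t ≥ 0, and y is nondecreasing with y(0) = 0. Then z(t) ≥ Γ(x)(t) = x(t) - inf_{0≤s≤t} x(s) for all t ≥ 0. -/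
open Set Filter

/-- The one-dimensional Skorohod map `Γ(x)(t) = x(t) - inf_{0≤s≤t} x(s)`. -/
noncomputable def skorohodMap (x : ℝ → ℝ) (t : ℝ) : ℝ :=
  x t - sInf (x '' Set.Icc 0 t)

/-- **Minimality of the Skorohod map.** If `z = x + y ≥ 0` on `[0,∞)` with `y`
nondecreasing and `y 0 = 0`, then `z t ≥ Γ(x)(t)` for all `t ≥ 0`. -/
theorem skorohodMap_minimality
    (x z y : ℝ → ℝ) (hx : RCLL x) (hz : RCLL z) (hy : RCLL y)
    (hx0 : 0 ≤ x 0)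
    (hzx : ∀ t : ℝ, 0 ≤ t → z t = x t + y t)
    (hznn : ∀ t : ℝ, 0 ≤ t → 0 ≤ z t)
    (hy0 : y 0 = 0)
    (hymono : ∀ s t : ℝ, 0 ≤ s → s ≤ t → y s ≤ y t) :
    ∀ t : ℝ, 0 ≤ t → skorohodMap x t ≤ z t := by
  intro t ht
  have hinf : -y t ≤ sInf (x '' Set.Icc 0 t) := by
    apply le_csInf
    · exact ⟨x 0, ⟨0, ⟨le_refl 0, ht⟩, rfl⟩⟩
    · rintro b ⟨s, ⟨hs0, hst⟩, rfl⟩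
      have hzs := hznn s hs0
      have := hzx s hs0
      have hys := hymono s t hs0 hst
      linarith
  have := hzx t ht
  unfold skorohodMap
  linarith
end

section
/- Let X be a K-dimensional Brownian motion with drift ϑ and covariance Σ, μ* ∈ ℝ^K positive, c ∈ ℝ^K positive, and assume c_K μ*_K = min_i c_i μ*_i. Define W*(t) = Σ_i X_i(t)/μ*_i - inf_{0≤s≤t} Σ_i X_i(s)/μ*_i, Q*_K(t) = μ*_K W*(t), Q*_j = 0 for j < K, and correspondingly η*_K(t) = W*(t) - X_K(t)/μ*_K, η*_j(t) = -X_j(t)/μ*_j for j < K. Then η* solves the Brownian control problem: for every admissible η̃ (i.e., Q̃_i(t) = X_i(t) + μ*_i η̃_i(t) ≥ 0 and Σ_i η̃_i nondecreasing from 0), one has E[∫_0^∞ e^{-γt} c·Q̃(t) dt] ≥ E[∫_0^∞ e^{-γt} c·Q*(t) dt], for any γ > 0. -/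
open Set Filter MeasureTheory ProbabilityTheory

/-- `X` is a `K`-dimensional Brownian motion with drift `ϑ` and covariance matrix `S`:
it starts at `0`, has continuous paths, independent increments, and every linear
functional of an increment over `[s,t]` is Gaussian with mean `a·ϑ (t-s)` and
variance `(aᵀ S a)(t-s)`. -/
def IsBrownianDriftCov {Ω : Type*} [MeasurableSpace Ω] (μ : Measure Ω) {K : ℕ}
    (X : ℝ → Ω → Fin K → ℝ) (ϑ : Fin K → ℝ) (S : Matrix (Fin K) (Fin K) ℝ) : Prop :=
  (∀ᵐ ω ∂μ, X 0 ω = 0 ∧ Continuous fun t : ℝ => X t ω) ∧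
  (∀ (m : ℕ) (t : Fin (m + 1) → ℝ), Monotone t → (∀ i, 0 ≤ t i) →
    ProbabilityTheory.iIndepFun
      (fun (i : Fin m) (ω : Ω) => fun k => X (t i.succ) ω k - X (t i.castSucc) ω k) μ) ∧
  (∀ s t : ℝ, 0 ≤ s → s ≤ t → ∀ a : Fin K → ℝ,
    Measure.map (fun ω => ∑ i, a i * (X t ω i - X s ω i)) μ =
      ProbabilityTheory.gaussianReal ((∑ i, a i * ϑ i) * (t - s))
        (Real.toNNReal ((t - s) * ∑ i, ∑ j, a i * S i j * a j)))

/-- **Optimality of `η*` for the Brownian control problem.**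
With `c_K μ*_K = min_i c_i μ*_i` (index `Fin.last K`), the control putting the whole
workload `W*` in the cheapest class satisfies: for every admissible `η̃`,
`E[∫_0^∞ e^{-γt} c·Q̃(t) dt] ≥ E[∫_0^∞ e^{-γt} c_K μ*_K W*(t) dt]`, where
`Q̃_i = X_i + μ*_i η̃_i`, `W*(t) = Σ_i X_i(t)/μ*_i - inf_{0≤s≤t} Σ_i X_i(s)/μ*_i`,
and the right side is the cost `E[∫_0^∞ e^{-γt} c·Q*(t) dt]` of the optimal state
`Q*_K = μ*_K W*`, `Q*_j = 0` for `j < K`. -/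
theorem bcp_cmu_optimality
    {Ω : Type*} {m0 : MeasurableSpace Ω} (μ : Measure Ω) [IsProbabilityMeasure μ]
    (ℱ : MeasureTheory.Filtration ℝ m0)
    (K : ℕ)
    (X : ℝ → Ω → Fin (K + 1) → ℝ) (ϑ : Fin (K + 1) → ℝ)
    (S : Matrix (Fin (K + 1)) (Fin (K + 1)) ℝ)
    (hX : IsBrownianDriftCov μ X ϑ S)
    (μstar c : Fin (K + 1) → ℝ)
    (hμstar : ∀ i, 0 < μstar i) (hc : ∀ i, 0 < c i)
    (hmin : ∀ i, c (Fin.last K) * μstar (Fin.last K) ≤ c i * μstar i)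
    (γ : ℝ) (hγ : 0 < γ)
    (η : ℝ → Ω → Fin (K + 1) → ℝ)
    (hη_adapted : ∀ t : ℝ, StronglyMeasurable[ℱ t] (η t))
    (hη_rcll : ∀ᵐ ω ∂μ, ∀ (i : Fin (K + 1)) (t : ℝ), 0 ≤ t →
      ContinuousWithinAt (fun s : ℝ => η s ω i) (Set.Ici t) t ∧
      (0 < t → ∃ l : ℝ, Filter.Tendsto (fun s : ℝ => η s ω i)
        (nhdsWithin t (Set.Iio t)) (nhds l)))
    (hQnn : ∀ᵐ ω ∂μ, ∀ (i : Fin (K + 1)) (t : ℝ), 0 ≤ t →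
      0 ≤ X t ω i + μstar i * η t ω i)
    (hI0 : ∀ᵐ ω ∂μ, (∑ i, η 0 ω i) = 0)
    (hImono : ∀ᵐ ω ∂μ, ∀ s t : ℝ, 0 ≤ s → s ≤ t →
      (∑ i, η s ω i) ≤ (∑ i, η t ω i)) :
    (∫⁻ ω, (∫⁻ t in Set.Ioi (0:ℝ),
        ENNReal.ofReal (Real.exp (-γ * t) *
          (c (Fin.last K) * μstar (Fin.last K) *
            ((∑ i, X t ω i / μstar i) -
              sInf ((fun s : ℝ => ∑ i, X s ω i / μstar i) '' Set.Icc 0 t))))) ∂μ)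
      ≤ ∫⁻ ω, (∫⁻ t in Set.Ioi (0:ℝ),
          ENNReal.ofReal (Real.exp (-γ * t) *
            (∑ i, c i * (X t ω i + μstar i * η t ω i)))) ∂μ := by
 
  have hA : 0 ≤ c (Fin.last K) * μstar (Fin.last K) :=
    (mul_pos (hc _) (hμstar _)).le
  refine lintegral_mono_ae ?_
  filter_upwards [hQnn, hImono] with ω hQ hI
  refine lintegral_mono_ae ?_
  rw [ae_restrict_iff' measurableSet_Ioi]
  refine ae_of_all _ fun t ht => ?_
  have ht0 : (0:ℝ) ≤ t := le_of_lt ht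
  refine ENNReal.ofReal_le_ofReal ?_
  refine mul_le_mul_of_nonneg_left ?_ (Real.exp_pos _).le
  have key : ∀ s : ℝ, 0 ≤ s →
      (∑ i, X s ω i / μstar i) + (∑ i, η s ω i) =
        ∑ i, (X s ω i + μstar i * η s ω i) / μstar i := by
    intro s hs
    rw [← Finset.sum_add_distrib]
    refine Finset.sum_congr rfl fun i _ => ?_
    have : μstar i ≠ 0 := (hμstar i).ne'
    field_simp
  have hinf : -(∑ i, η t ω i) ≤
      sInf ((fun s : ℝ => ∑ i, X s ω i / μstar i) '' Set.Icc 0 t) := by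
    refine le_csInf ⟨∑ i, X 0 ω i / μstar i, ⟨0, Set.left_mem_Icc.2 ht0, rfl⟩⟩ ?_
    rintro x ⟨s, hs, rfl⟩
    have h1 : 0 ≤ (∑ i, X s ω i / μstar i) + (∑ i, η s ω i) := by
      rw [key s hs.1]
      exact Finset.sum_nonneg fun i _ => div_nonneg (hQ i s hs.1) (hμstar i).le
    have h2 : (∑ i, η s ω i) ≤ (∑ i, η t ω i) := hI s t hs.1 hs.2
    linarith
  calc c (Fin.last K) * μstar (Fin.last K) *
      ((∑ i, X t ω i / μstar i) -
        sInf ((fun s : ℝ => ∑ i, X s ω i / μstar i) '' Set.Icc 0 t))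
      ≤ c (Fin.last K) * μstar (Fin.last K) *
        ((∑ i, X t ω i / μstar i) + (∑ i, η t ω i)) := by
        refine mul_le_mul_of_nonneg_left ?_ hA
        linarith
    _ = ∑ i, c (Fin.last K) * μstar (Fin.last K) *
          ((X t ω i + μstar i * η t ω i) / μstar i) := by
        rw [key t ht0, Finset.mul_sum]
    _ ≤ ∑ i, c i * (X t ω i + μstar i * η t ω i) := by
        refine Finset.sum_le_sum fun i _ => ?_
        have hq : 0 ≤ X t ω i + μstar i * η t ω i := hQ i t ht0
        have hd : 0 ≤ (X t ω i + μstar i * η t ω i) / μstar i :=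
          div_nonneg hq (hμstar i).le
        calc c (Fin.last K) * μstar (Fin.last K) *
            ((X t ω i + μstar i * η t ω i) / μstar i)
            ≤ c i * μstar i * ((X t ω i + μstar i * η t ω i) / μstar i) :=
              mul_le_mul_of_nonneg_right (hmin i) hd
          _ = c i * (X t ω i + μstar i * η t ω i) := by
              have : μstar i ≠ 0 := (hμstar i).ne'
              field_simp
end

section
/- Let W : [0,∞) → [0,∞), Ĩ : [0,∞) → [0,∞) and ξ : [0,∞) → ℝ be functions with W(t) = ξ(t) + θ t + ζ(t) where θ < 0 and ζ is nondecreasing, ζ(0) = 0, and ζ increases only when W = 0, with W(0) = 0 and W right-continuous with left limits. Define τ(t) = sup{0 ≤ s ≤ t : W(s) = 0}. Then for all t ≥ 0: W(t) = ξ(t) - ξ(τ(t)-) + θ(t - τ(t)), and consequently 0 ≤ -θ (t - τ(t)) ≤ ξ(t) - ξ(τ(t)-). -/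
open Set Filter

/-- **Pathwise identity for state-space collapse.**
Suppose `W = ξ + θ·t + ζ ≥ 0` on `[0,∞)` with `θ < 0`, `W(0) = 0`, `ζ` continuous
nondecreasing with `ζ(0) = 0` increasing only when `W = 0`, `W, ξ` RCLL (extended
constantly to `(-∞,0]`), and `W(τ(t)-) = 0` where
`τ(t) = sup {0 ≤ s ≤ t : W(s) = 0}`. Then for every `t ≥ 0`,
`W(t) = ξ(t) - ξ(τ(t)-) + θ (t - τ(t))` and
`0 ≤ -θ (t - τ(t)) ≤ ξ(t) - ξ(τ(t)-)`. -/
theorem state_space_collapse_identity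
    (W ξ ζ : ℝ → ℝ) (θ : ℝ) (hθ : θ < 0)
    (hWe : ∀ t : ℝ, 0 ≤ t → W t = ξ t + θ * t + ζ t)
    (hW0 : W 0 = 0)
    (hWnn : ∀ t : ℝ, 0 ≤ t → 0 ≤ W t)
    (hWext : ∀ s : ℝ, s ≤ 0 → W s = 0)
    (hξext : ∀ s : ℝ, s ≤ 0 → ξ s = ξ 0)
    (hζ0 : ζ 0 = 0)
    (hζcont : Continuous ζ)
    (hζmono : ∀ s t : ℝ, 0 ≤ s → s ≤ t → ζ s ≤ ζ t)
    (hζflat : ∀ s t : ℝ, 0 ≤ s → s ≤ t → (∀ u ∈ Set.Icc s t, 0 < W u) → ζ t = ζ s)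
    (hWrcll : RCLL W) (hξrcll : RCLL ξ)
    (τ : ℝ → ℝ) (hτ : ∀ t : ℝ, τ t = sSup {s : ℝ | 0 ≤ s ∧ s ≤ t ∧ W s = 0})
    (hWleft : ∀ t : ℝ, 0 ≤ t →
      Filter.Tendsto W (nhdsWithin (τ t) (Set.Iio (τ t))) (nhds 0)) :
    ∀ t : ℝ, 0 ≤ t → ∀ l : ℝ,
      Filter.Tendsto ξ (nhdsWithin (τ t) (Set.Iio (τ t))) (nhds l) →
        W t = ξ t - l + θ * (t - τ t) ∧
        0 ≤ -θ * (t - τ t) ∧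
        -θ * (t - τ t) ≤ ξ t - l := by
  intro t ht l hl
  have h0S : (0:ℝ) ∈ {s : ℝ | 0 ≤ s ∧ s ≤ t ∧ W s = 0} := ⟨le_refl 0, ht, hW0⟩
  have hbdd : BddAbove {s : ℝ | 0 ≤ s ∧ s ≤ t ∧ W s = 0} := ⟨t, fun s hs => hs.2.1⟩
  have hτ0 : 0 ≤ τ t := by rw [hτ t]; exact le_csSup hbdd h0S
  have hτt : τ t ≤ t := by rw [hτ t]; exact csSup_le ⟨0, h0S⟩ (fun s hs => hs.2.1)
  have hpos : ∀ s, τ t < s → s ≤ t → 0 < W s := by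
    intro s hs1 hs2
    have hs0 : 0 ≤ s := le_of_lt (lt_of_le_of_lt hτ0 hs1)
    rcases lt_or_eq_of_le (hWnn s hs0) with h | h
    · exact h
    · exfalso
      have hmem : s ∈ {s : ℝ | 0 ≤ s ∧ s ≤ t ∧ W s = 0} := ⟨hs0, hs2, h.symm⟩
      have := le_csSup hbdd hmem
      rw [← hτ t] at this
      exact absurd this (not_le.mpr hs1)
  have hζeq : ζ t = ζ (τ t) := by
    rcases eq_or_lt_of_le hτt with h | h
    · rw [h]
    · have hconst : ∀ s, τ t < s → s ≤ t → ζ t = ζ s := fun s hs1 hs2 =>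
        hζflat s t (le_of_lt (lt_of_le_of_lt hτ0 hs1)) hs2
          (fun u hu => hpos u (lt_of_lt_of_le hs1 hu.1) hu.2)
      have hnb : (nhdsWithin (τ t) (Set.Ioc (τ t) t)).NeBot := by
        apply mem_closure_iff_nhdsWithin_neBot.mp
        rw [closure_Ioc (ne_of_lt h)]
        exact ⟨le_refl _, le_of_lt h⟩
      have h1 : Tendsto ζ (nhdsWithin (τ t) (Set.Ioc (τ t) t)) (nhds (ζ (τ t))) :=
        (hζcont.tendsto _).mono_left nhdsWithin_le_nhds
      have h2 : Tendsto ζ (nhdsWithin (τ t) (Set.Ioc (τ t) t)) (nhds (ζ t)) := by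
        have heq : (fun _ : ℝ => ζ t) =ᶠ[nhdsWithin (τ t) (Set.Ioc (τ t) t)] ζ := by
          filter_upwards [self_mem_nhdsWithin] with s hs
          exact hconst s hs.1 hs.2
        exact Filter.Tendsto.congr' heq tendsto_const_nhds
      exact tendsto_nhds_unique h2 h1
  have key : l + θ * τ t + ζ (τ t) = 0 := by
    rcases eq_or_lt_of_le hτ0 with h0 | h0
    · -- τ t = 0
      have hξ0 : ξ 0 = 0 := by have := hWe 0 le_rfl; rw [hW0, hζ0] at this; linarith
      have hl0 : l = ξ 0 := by
        have hc : Tendsto ξ (nhdsWithin (τ t) (Set.Iio (τ t))) (nhds (ξ 0)) := by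
          have heq : (fun _ : ℝ => ξ 0) =ᶠ[nhdsWithin (τ t) (Set.Iio (τ t))] ξ := by
            filter_upwards [self_mem_nhdsWithin] with s hs
            rw [Set.mem_Iio, ← h0] at hs
            exact (hξext s (le_of_lt hs)).symm
          exact Filter.Tendsto.congr' heq tendsto_const_nhds
        exact tendsto_nhds_unique hl hc
      rw [hl0, hξ0, ← h0, hζ0]; ring
    · have hW' : Tendsto W (nhdsWithin (τ t) (Set.Iio (τ t))) (nhds 0) := hWleft t ht
      have hlin : Tendsto (fun s => ξ s + θ * s + ζ s) (nhdsWithin (τ t) (Set.Iio (τ t)))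
          (nhds (l + θ * τ t + ζ (τ t))) := by
        refine Filter.Tendsto.add (Filter.Tendsto.add hl ?_) ?_
        · exact (tendsto_const_nhds.mul (tendsto_id.mono_left nhdsWithin_le_nhds))
        · exact (hζcont.tendsto _).mono_left nhdsWithin_le_nhds
      have hev : (fun s => ξ s + θ * s + ζ s) =ᶠ[nhdsWithin (τ t) (Set.Iio (τ t))] W := by
        have hgt : ∀ᶠ s in nhdsWithin (τ t) (Set.Iio (τ t)), 0 < s :=
          eventually_nhdsWithin_of_eventually_nhds (eventually_gt_nhds h0)
        filter_upwards [hgt] with s hs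
        exact (hWe s (le_of_lt hs)).symm
      exact tendsto_nhds_unique (hlin.congr' hev) hW'
  have hWt : W t = ξ t - l + θ * (t - τ t) := by
    have := hWe t ht
    rw [hζeq] at this
    linarith [this]
  refine ⟨hWt, ?_, ?_⟩
  · have := mul_nonneg (neg_nonneg.mpr (le_of_lt hθ)) (sub_nonneg.mpr hτt)
    linarith
  · have := hWnn t ht
    linarith
end

section
/- Let Γ be the one-dimensional Skorohod map Γ(x)(t) = x(t) - inf_{0≤s≤t} x(s), and let x̃ and φ be RCLL functions with x̃(0) + φ(0) ≥ 0. Suppose W(t) = x̃(t) - φ(t) + I(t) ≥ 0 where I(t) = -inf_{0≤s≤t}(x̃(s) - φ(s)). Define W̃(t) = W(t) + φ(t) + inf_{0≤s≤t}(-φ(s)). Then for all t ≥ 0: x̃(t) - sup_{0≤s≤t}|x̃(s)| ≤ W̃(t) ≤ Γ(x̃)(t). -/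
open Set Filter

lemma rcll_bdd {f : ℝ → ℝ} (hf : RCLL f) (T : ℝ) :
    ∃ M : ℝ, ∀ s ∈ Set.Icc (0:ℝ) T, |f s| ≤ M := by
  have hK : IsCompact (Icc (0:ℝ) T) := isCompact_Icc
  refine hK.induction_on (p := fun s => ∃ M : ℝ, ∀ x ∈ s, |f x| ≤ M) ⟨0, by simp⟩ ?_ ?_ ?_
  · rintro s t hst ⟨M, hM⟩
    exact ⟨M, fun x hx => hM x (hst hx)⟩
  · rintro s t ⟨M, hM⟩ ⟨N, hN⟩
    exact ⟨max M N, fun x hx => hx.elim (fun h => (hM x h).trans (le_max_left _ _))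
      (fun h => (hN x h).trans (le_max_right _ _))⟩
  · intro x hx
    have hx0 : 0 ≤ x := hx.1
    have h1 : ∀ᶠ s in nhdsWithin x (Ici x), |f s| ≤ |f x| + 1 := by
      have ht : Tendsto (fun s => |f s|) (nhdsWithin x (Ici x)) (nhds |f x|) :=
        ((hf.1 x hx0).tendsto).abs
      exact (ht.eventually_lt_const (lt_add_one _)).mono fun s hs => hs.le
    rcases eq_or_lt_of_le hx0 with h | h
    · refine ⟨{s | |f s| ≤ |f x| + 1}, ?_, ⟨|f x| + 1, fun y hy => hy⟩⟩
      have : nhdsWithin x (Icc 0 T) ≤ nhdsWithin x (Ici x) := by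
        apply nhdsWithin_mono
        rw [← h]; exact Icc_subset_Ici_self
      exact this h1
    · obtain ⟨l, hl⟩ := hf.2 x h
      have h2 : ∀ᶠ s in nhdsWithin x (Iio x), |f s| ≤ |l| + 1 := by
        have ht : Tendsto (fun s => |f s|) (nhdsWithin x (Iio x)) (nhds |l|) := hl.abs
        exact (ht.eventually_lt_const (lt_add_one _)).mono fun s hs => hs.le
      set M := max (|f x| + 1) (|l| + 1) with hM
      refine ⟨{s | |f s| ≤ M}, ?_, ⟨M, fun y hy => hy⟩⟩
      have hmem : {s | |f s| ≤ M} ∈ nhds x := by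
        have hu : (Iio x ∪ Ici x : Set ℝ) = univ := by
          ext y; simp [lt_or_ge]
        have : nhds x = nhdsWithin x (Iio x ∪ Ici x) := by
          rw [hu, nhdsWithin_univ]
        rw [this, nhdsWithin_union]
        refine mem_sup.2 ⟨?_, ?_⟩
        · exact h2.mono fun s hs => hs.trans (le_max_right _ _)
        · exact h1.mono fun s hs => hs.trans (le_max_left _ _)
      exact nhdsWithin_le_nhds hmem

/-- **Sandwich estimate for the perturbed reflected process** (eq. (5.32)).
With `I(t) = -inf_{0≤s≤t}(x̃(s) - φ(s))`, `W = x̃ - φ + I ≥ 0` and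
`W̃(t) = W(t) + φ(t) + inf_{0≤s≤t}(-φ(s))`, one has
`x̃(t) - sup_{0≤s≤t}|x̃(s)| ≤ W̃(t) ≤ Γ(x̃)(t)` for all `t ≥ 0`. -/
theorem perturbed_reflection_sandwich
    (xt φ : ℝ → ℝ) (hxt : RCLL xt) (hφ : RCLL φ)
    (h0 : 0 ≤ xt 0 + φ 0)
    (I W Wt : ℝ → ℝ)
    (hI : ∀ t : ℝ, I t = -sInf ((fun s => xt s - φ s) '' Set.Icc 0 t))
    (hW : ∀ t : ℝ, W t = xt t - φ t + I t)
    (hWnn : ∀ t : ℝ, 0 ≤ t → 0 ≤ W t)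
    (hWt : ∀ t : ℝ, Wt t = W t + φ t + sInf ((fun s => -φ s) '' Set.Icc 0 t)) :
    ∀ t : ℝ, 0 ≤ t →
      xt t - sSup ((fun s => |xt s|) '' Set.Icc 0 t) ≤ Wt t ∧
      Wt t ≤ skorohodMap xt t := by
  intro t ht
  obtain ⟨Mx, hMx⟩ := rcll_bdd hxt t
  obtain ⟨Mφ, hMφ⟩ := rcll_bdd hφ t
  have h0t : (0:ℝ) ∈ Icc (0:ℝ) t := ⟨le_refl 0, ht⟩
  have hne : (Icc (0:ℝ) t).Nonempty := ⟨0, h0t⟩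
  -- nonempty images
  have hne1 : ((fun s => xt s - φ s) '' Icc 0 t).Nonempty := hne.image _
  have hne2 : ((fun s => -φ s) '' Icc 0 t).Nonempty := hne.image _
  have hne3 : ((fun s => |xt s|) '' Icc 0 t).Nonempty := hne.image _
  have hne4 : (xt '' Icc 0 t).Nonempty := hne.image _
  -- bounds
  have hbb1 : BddBelow ((fun s => xt s - φ s) '' Icc 0 t) := by
    refine ⟨-(Mx + Mφ), ?_⟩
    rintro y ⟨s, hs, rfl⟩
    show -(Mx + Mφ) ≤ xt s - φ s
    have h1 := abs_le.1 (hMx s hs); have h2 := abs_le.1 (hMφ s hs)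
    linarith [h1.1, h2.2]
  have hbb2 : BddBelow ((fun s => -φ s) '' Icc 0 t) := by
    refine ⟨-Mφ, ?_⟩
    rintro y ⟨s, hs, rfl⟩
    show -Mφ ≤ -φ s
    have := abs_le.1 (hMφ s hs); linarith [this.2]
  have hba3 : BddAbove ((fun s => |xt s|) '' Icc 0 t) := by
    refine ⟨Mx, ?_⟩
    rintro y ⟨s, hs, rfl⟩
    exact hMx s hs
  have hbb4 : BddBelow (xt '' Icc 0 t) := by
    refine ⟨-Mx, ?_⟩
    rintro y ⟨s, hs, rfl⟩
    exact (abs_le.1 (hMx s hs)).1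
  have hWteq : Wt t = xt t + I t + sInf ((fun s => -φ s) '' Icc 0 t) := by
    rw [hWt, hW]; ring
  constructor
  · -- lower bound
    rw [hWteq, hI t]
    have key : sInf ((fun s => xt s - φ s) '' Icc 0 t) ≤
        sSup ((fun s => |xt s|) '' Icc 0 t) + sInf ((fun s => -φ s) '' Icc 0 t) := by
      refine le_of_forall_pos_le_add fun ε hε => ?_
      obtain ⟨y, ⟨s, hs, rfl⟩, hy⟩ := Real.lt_sInf_add_pos hne2 hε
      simp only at hy
      calc sInf ((fun s => xt s - φ s) '' Icc 0 t) ≤ xt s - φ s :=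
            csInf_le hbb1 (mem_image_of_mem _ hs)
        _ = xt s + (-φ s) := by ring
        _ ≤ sSup ((fun s => |xt s|) '' Icc 0 t) + (sInf ((fun s => -φ s) '' Icc 0 t) + ε) := by
            have h1 : xt s ≤ sSup ((fun s => |xt s|) '' Icc 0 t) :=
              (le_abs_self _).trans (le_csSup hba3 (mem_image_of_mem _ hs))
            linarith
        _ = sSup ((fun s => |xt s|) '' Icc 0 t) + sInf ((fun s => -φ s) '' Icc 0 t) + ε := by ring
    linarith
  · -- upper bound
    rw [hWteq, hI t, skorohodMap]
    have key : sInf (xt '' Icc 0 t) + sInf ((fun s => -φ s) '' Icc 0 t) ≤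
        sInf ((fun s => xt s - φ s) '' Icc 0 t) := by
      refine le_csInf hne1 ?_
      rintro y ⟨s, hs, rfl⟩
      show _ ≤ xt s - φ s
      have h1 : sInf (xt '' Icc 0 t) ≤ xt s := csInf_le hbb4 (mem_image_of_mem _ hs)
      have h2 : sInf ((fun s => -φ s) '' Icc 0 t) ≤ -φ s :=
        csInf_le hbb2 (mem_image_of_mem _ hs)
      linarith
    linarith
end
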